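/- Let f(x) = x^n h(x^{(q-1)/m}) be m-nice over F_q and let b ∈ F_q^* and k ≥ 1. Then the number of solutions x ∈ F_q of f^{(k)}(x) = b is either 0 or gcd(n^k, ν), where ν is defined by writing (q-1)/m = νω with ω the greatest divisor of (q-1)/m coprime to n. -/

import Mathlib

lemma aux_count_roots {F : Type*} [Field F] [Fintype F] (G : ℕ) (hG : 0 < G)
    (hGd : G ∣ Fintype.card F - 1) : {u : F | u ^ G = 1}.ncard = G := by
  classical
  obtain ⟨g, hg⟩ := IsCyclic.exists_generator (α := Fˣ)
  have hord : orderOf g = Fintype.card F - 1 := by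
    rw [orderOf_eq_card_of_forall_mem_zpowers hg, Nat.card_eq_fintype_card,
      Fintype.card_units]
  have hcard : 0 < Fintype.card F - 1 := by
    have := Fintype.one_lt_card (α := F); omega
  have hprim : IsPrimitiveRoot g (Fintype.card F - 1) := hord ▸ IsPrimitiveRoot.orderOf g
  obtain ⟨c, hc⟩ := hGd
  have hprimG : IsPrimitiveRoot (g ^ c) G :=
    hprim.pow hcard (hc.trans (mul_comm G c))
  have hprimF : IsPrimitiveRoot ((g : F) ^ c) G := by
    have := (IsPrimitiveRoot.coe_units_iff (ζ := g ^ c)).mpr hprimG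
    simpa using this
  have hset : {u : F | u ^ G = 1} = ↑(Polynomial.nthRootsFinset G (1 : F)) := by
    ext u
    simp [Polynomial.mem_nthRootsFinset hG]
  rw [hset, Set.ncard_coe_finset, hprimF.card_nthRootsFinset]

theorem stmt7 {F : Type*} [Field F] [Fintype F] (q n m k ν ω : ℕ)
    (hq : Fintype.card F = q) (hm : m ∣ q - 1) (hm0 : 0 < m) (hn : 0 < n) (hk : 0 < k)
    (h : Polynomial F) (hh0 : h.eval 0 ≠ 0)
    (f ψ : F → F)
    (hf : ∀ x, f x = x ^ n * h.eval (x ^ ((q - 1) / m)))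
    (hψ : ∀ x, ψ x = x ^ n * (h.eval x) ^ ((q - 1) / m))
    -- f is m-nice
    (hmap : ∀ x : F, x ^ m = 1 → ψ x = 0 ∨ (ψ x) ^ m = 1)
    (hinj : ∀ x y : F, x ^ m = 1 → y ^ m = 1 → ψ x ≠ 0 → ψ y ≠ 0 → ψ x = ψ y → x = y)
    -- (q-1)/m = ν·ω with ω the greatest divisor of (q-1)/m coprime to n
    (hνω : (q - 1) / m = ν * ω) (hωcop : Nat.Coprime ω n)
    (hωmax : ∀ w, w ∣ (q - 1) / m → Nat.Coprime w n → w ∣ ω)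
    (b : F) (hb : b ≠ 0) :
    Set.ncard {x : F | f^[k] x = b} = 0 ∨
      Set.ncard {x : F | f^[k] x = b} = Nat.gcd (n ^ k) ν := by
  set d := (q - 1) / m with hd_def
  have hq1 : 0 < q - 1 := by
    have := Fintype.one_lt_card (α := F); omega
  have hd : 0 < d := Nat.div_pos (Nat.le_of_dvd hq1 hm) hm0
  have hdm : d * m = q - 1 := Nat.div_mul_cancel hm
  -- basic facts
  have f0 : f 0 = 0 := by rw [hf, zero_pow hn.ne', zero_mul]
  have fk0 : ∀ j : ℕ, f^[j] (0 : F) = 0 := fun j => Function.iterate_fixed f0 j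
  have ψ0 : ψ 0 = 0 := by rw [hψ, zero_pow hn.ne', zero_mul]
  have ψk0 : ∀ j : ℕ, ψ^[j] (0 : F) = 0 := fun j => Function.iterate_fixed ψ0 j
  have hxmem : ∀ x : F, x ≠ 0 → (x ^ d) ^ m = 1 := by
    intro x hx
    rw [← pow_mul, hdm, ← hq]
    exact FiniteField.pow_card_sub_one_eq_one x hx
  -- compatibility: (f x)^d = ψ (x^d)
  have hcompat : ∀ x : F, (f x) ^ d = ψ (x ^ d) := by
    intro x
    rw [hf, hψ, mul_pow, ← pow_mul, ← pow_mul, mul_comm n d]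
  have hcompatk : ∀ (j : ℕ) (x : F), (f^[j] x) ^ d = ψ^[j] (x ^ d) := by
    intro j
    induction j with
    | zero => intro x; simp
    | succ j ih =>
      intro x
      rw [Function.iterate_succ_apply, Function.iterate_succ_apply, ih (f x), hcompat]
  -- ψ iterates stay in μ_m ∪ {0}
  have hmemk : ∀ (j : ℕ) (t : F), t ^ m = 1 → ψ^[j] t = 0 ∨ (ψ^[j] t) ^ m = 1 := by
    intro j
    induction j with
    | zero => intro t ht; exact Or.inr ht
    | succ j ih =>
      intro t ht
      rw [Function.iterate_succ_apply']
      rcases ih t ht with h0 | h1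
      · rw [h0, ψ0]; exact Or.inl rfl
      · exact hmap _ h1
  -- injectivity of ψ iterates away from 0
  have hinjk : ∀ (j : ℕ) (s t : F), s ^ m = 1 → t ^ m = 1 →
      ψ^[j] s = ψ^[j] t → ψ^[j] s ≠ 0 → s = t := by
    intro j
    induction j with
    | zero => intro s t _ _ he _; exact he
    | succ j ih =>
      intro s t hs ht he hne
      simp only [Function.iterate_succ_apply] at he hne
      have hψs : ψ s ≠ 0 := by
        intro h0; rw [h0, ψk0] at hne; exact hne rfl
      have hψt : ψ t ≠ 0 := by
        intro h0; rw [h0, ψk0] at he; rw [he] at hne; exact hne rfl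
      have hsm : (ψ s) ^ m = 1 := (hmap s hs).resolve_left hψs
      have htm : (ψ t) ^ m = 1 := (hmap t ht).resolve_left hψt
      exact hinj s t hs ht hψs hψt (ih (ψ s) (ψ t) hsm htm he hne)
  -- key product identity
  have key : ∀ (j : ℕ) (x y : F), x ^ d = y ^ d →
      f^[j] x * y ^ (n ^ j) = f^[j] y * x ^ (n ^ j) := by
    intro j
    induction j with
    | zero => intro x y _; simp [mul_comm]
    | succ j ih =>
      intro x y hxy
      by_cases hc : h.eval (x ^ d) = 0
      · have hfx : f x = 0 := by rw [hf, hc, mul_zero]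
        have hfy : f y = 0 := by rw [hf, ← hxy, hc, mul_zero]
        rw [Function.iterate_succ_apply, Function.iterate_succ_apply, hfx, hfy, fk0,
          zero_mul, zero_mul]
      · have hfd : (f x) ^ d = (f y) ^ d := by
          rw [hcompat, hcompat, hxy]
        have ihx := ih (f x) (f y) hfd
        have hfx : f x = x ^ n * h.eval (x ^ d) := hf x
        have hfy : f y = y ^ n * h.eval (x ^ d) := by rw [hf, ← hxy]
        have hcn : (h.eval (x ^ d)) ^ (n ^ j) ≠ 0 := pow_ne_zero _ hc
        apply mul_right_cancel₀ hcn
        have e1 : (f y) ^ n ^ j = y ^ n ^ (j + 1) * (h.eval (x ^ d)) ^ n ^ j := by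
          rw [hfy, mul_pow, ← pow_mul, ← pow_succ']
        have e2 : (f x) ^ n ^ j = x ^ n ^ (j + 1) * (h.eval (x ^ d)) ^ n ^ j := by
          rw [hfx, mul_pow, ← pow_mul, ← pow_succ']
        rw [Function.iterate_succ_apply, Function.iterate_succ_apply]
        calc f^[j] (f x) * y ^ n ^ (j + 1) * (h.eval (x ^ d)) ^ n ^ j
            = f^[j] (f x) * (f y) ^ n ^ j := by rw [e1]; ring
          _ = f^[j] (f y) * (f x) ^ n ^ j := ihx
          _ = f^[j] (f y) * x ^ n ^ (j + 1) * (h.eval (x ^ d)) ^ n ^ j := by rw [e2]; ring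
  -- the fiber
  set S : Set F := {x : F | f^[k] x = b} with hS_def
  rcases Set.eq_empty_or_nonempty S with hSe | ⟨x₀, hx₀⟩
  · left; rw [hSe, Set.ncard_empty]
  · right
    set G := Nat.gcd (n ^ k) d with hG_def
    have hG0 : 0 < G := Nat.gcd_pos_of_pos_left _ (pow_pos hn k)
    have hx₀b : f^[k] x₀ = b := hx₀
    have hx₀0 : x₀ ≠ 0 := by
      intro h0; rw [h0, fk0] at hx₀b; exact hb hx₀b.symm
    -- S = x₀ • μ_G
    have hSeq : S = (fun u => x₀ * u) '' {u : F | u ^ G = 1} := by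
      ext y
      constructor
      · intro hy
        have hyb : f^[k] y = b := hy
        have hy0 : y ≠ 0 := by
          intro h0; rw [h0, fk0] at hyb; exact hb hyb.symm
        -- x₀^d = y^d via ψ-injectivity
        have hψne : ψ^[k] (x₀ ^ d) ≠ 0 := by
          rw [← hcompatk, hx₀b]
          exact pow_ne_zero d hb
        have hψeq : ψ^[k] (x₀ ^ d) = ψ^[k] (y ^ d) := by
          rw [← hcompatk, ← hcompatk, hx₀b, hyb]
        have hded : x₀ ^ d = y ^ d :=
          hinjk k _ _ (hxmem x₀ hx₀0) (hxmem y hy0) hψeq hψne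
        have hkey := key k x₀ y hded
        rw [hx₀b, hyb] at hkey
        have hpow : y ^ (n ^ k) = x₀ ^ (n ^ k) := mul_left_cancel₀ hb hkey
        refine ⟨y / x₀, ?_, by field_simp⟩
        -- (y/x₀)^G = 1
        have h1 : (y / x₀) ^ d = 1 := by
          rw [div_pow, hded, div_self (pow_ne_zero d hy0)]
        have h2 : (y / x₀) ^ (n ^ k) = 1 := by
          rw [div_pow, hpow, div_self (pow_ne_zero _ hx₀0)]
        show (y / x₀) ^ G = 1
        have hab : (G : ℤ) = (n ^ k : ℕ) * Nat.gcdA (n ^ k) d + (d : ℕ) * Nat.gcdB (n ^ k) d :=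
          Nat.gcd_eq_gcd_ab (n ^ k) d
        have hu : y / x₀ ≠ 0 := div_ne_zero hy0 hx₀0
        calc (y / x₀) ^ G = (y / x₀) ^ (G : ℤ) := (zpow_natCast _ _).symm
          _ = (y / x₀) ^ ((n ^ k : ℕ) * Nat.gcdA (n ^ k) d + (d : ℕ) * Nat.gcdB (n ^ k) d) := by
              rw [← hab]
          _ = ((y / x₀) ^ (n ^ k : ℕ)) ^ Nat.gcdA (n ^ k) d
              * ((y / x₀) ^ (d : ℕ)) ^ Nat.gcdB (n ^ k) d := by
              rw [zpow_add₀ hu, zpow_mul, zpow_mul, zpow_natCast, zpow_natCast]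
          _ = 1 := by rw [h1, h2, one_zpow, one_zpow, one_mul]
      · rintro ⟨u, hu, rfl⟩
        have hu1 : u ^ G = 1 := hu
        have hud : u ^ d = 1 := by
          obtain ⟨c, hc⟩ := Nat.gcd_dvd_right (n ^ k) d
          rw [hc, pow_mul, hu1, one_pow]
        have hun : u ^ (n ^ k) = 1 := by
          obtain ⟨c, hc⟩ := Nat.gcd_dvd_left (n ^ k) d
          rw [hc, pow_mul, hu1, one_pow]
        have hded : (x₀ * u) ^ d = x₀ ^ d := by
          rw [mul_pow, hud, mul_one]
        have hkey := key k (x₀ * u) x₀ hded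
        rw [hx₀b, mul_pow, hun, mul_one] at hkey
        show f^[k] (x₀ * u) = b
        exact mul_right_cancel₀ (pow_ne_zero _ hx₀0) hkey
    -- counting
    have hGd : G ∣ Fintype.card F - 1 := by
      rw [hq]
      exact (Nat.gcd_dvd_right (n ^ k) d).trans (Dvd.intro m hdm)
    have hcount : ({u : F | u ^ G = 1}).ncard = G := aux_count_roots G hG0 hGd
    have : S.ncard = G := by
      rw [hSeq, Set.ncard_image_of_injective _ (mul_right_injective₀ hx₀0), hcount]
    rw [this]
    -- G = gcd(n^k, ν)
    show Nat.gcd (n ^ k) d = Nat.gcd (n ^ k) ν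
    rw [hνω]
    exact Nat.Coprime.gcd_mul_right_cancel_right ν (Nat.Coprime.pow_right k hωcop)
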